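/- Let β > 0, e₀' ∈ ℝ, and let K be a compact subset of ℂ \ [exp(β·e₀'), ∞). Then there exists η > 0 such that for every z ∈ K and every ξ ∈ ℂ with Re ξ ≥ e₀' and |Im ξ| ≤ η/β, one has 1 - z·exp(-β·ξ) ∉ (-∞, 0]; consequently (z, ξ) ↦ Log(1 - z·exp(-β·ξ)) is jointly analytic on K × {ξ : Re ξ > e₀', |Im ξ| < η/β} (interior). -/

import Mathlib

open Complex Set

private lemma stmt_1_aux (β e₀' : ℝ) (hβ : 0 < β) (K : Set ℂ) (hK : IsCompact K)
    (hKD : K ⊆ {z : ℂ | ¬ (z.im = 0 ∧ Real.exp (β * e₀') ≤ z.re)})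
    (hKne : K.Nonempty) :
    ∃ η > 0, ∀ z ∈ K, ∀ ξ : ℂ, e₀' ≤ ξ.re → |ξ.im| ≤ η / β →
        ¬ ((1 - z * Complex.exp (-(β : ℂ) * ξ)).im = 0 ∧
           (1 - z * Complex.exp (-(β : ℂ) * ξ)).re ≤ 0) := by
  set E := Real.exp (β * e₀') with hE
  have hEpos : 0 < E := Real.exp_pos _
  set R : Set ℂ := {z : ℂ | z.im = 0} ∩ {z : ℂ | E ≤ z.re} with hR
  have hRclosed : IsClosed R :=
    (isClosed_eq Complex.continuous_im continuous_const).inter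
      (isClosed_le continuous_const Complex.continuous_re)
  have hRne : R.Nonempty := ⟨(E : ℂ), by simp [hR]⟩
  obtain ⟨M, hM⟩ := hK.isBounded.exists_norm_le
  set M' : ℝ := max M 1 with hM'
  have hM'pos : (0:ℝ) < M' := lt_of_lt_of_le one_pos (le_max_right _ _)
  obtain ⟨z₀, hz₀K, hz₀min⟩ := hK.exists_isMinOn hKne
    (Metric.continuous_infDist_pt R).continuousOn
  set d : ℝ := Metric.infDist z₀ R with hd
  have hdpos : 0 < d := by
    rw [hd, ← hRclosed.notMem_iff_infDist_pos hRne]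
    intro hmem
    exact hKD hz₀K ⟨hmem.1, hmem.2⟩
  refine ⟨min 1 (d / (4 * M')), lt_min one_pos (by positivity), ?_⟩
  intro z hz ξ hre him ⟨him0, hre0⟩
  set w : ℂ := z * Complex.exp (-(β : ℂ) * ξ) with hw
  have hwim : w.im = 0 := by
    have : (1 - w).im = -w.im := by simp
    rw [this] at him0; linarith
  have hwre : 1 ≤ w.re := by
    have : (1 - w).re = 1 - w.re := by simp
    rw [this] at hre0; linarith
  -- z = w * exp(β ξ)
  have hzw : z = w * Complex.exp ((β : ℂ) * ξ) := by
    rw [hw, mul_assoc, ← Complex.exp_add]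
    simp
  have hwr : (w.re : ℂ) = w := Complex.ext (by simp) (by simp [hwim])
  set θ : ℝ := β * ξ.im with hθ
  have hθle : |θ| ≤ min 1 (d / (4 * M')) := by
    rw [hθ, abs_mul, abs_of_pos hβ]
    calc β * |ξ.im| ≤ β * (min 1 (d / (4 * M')) / β) :=
          mul_le_mul_of_nonneg_left him hβ.le
      _ = min 1 (d / (4 * M')) := by field_simp
  set ρ : ℝ := w.re * Real.exp (β * ξ.re) with hρ
  have hρE : E ≤ ρ := by
    calc E = 1 * E := (one_mul E).symm
      _ ≤ w.re * Real.exp (β * ξ.re) := by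
        apply mul_le_mul hwre _ hEpos.le (le_trans (by linarith) hwre)
        exact Real.exp_le_exp.2 (mul_le_mul_of_nonneg_left hre hβ.le)
  have hρpos : 0 < ρ := lt_of_lt_of_le hEpos hρE
  have hzρ : z = (ρ : ℂ) * Complex.exp ((θ : ℂ) * I) := by
    have hsplit : ((β : ℂ) * ξ) = (↑(β * ξ.re) : ℂ) + (θ : ℂ) * I := by
      apply Complex.ext <;> simp [hθ]
    rw [hzw, ← hwr, hsplit, Complex.exp_add, hρ]
    push_cast
    ring
  have hρR : (ρ : ℂ) ∈ R := ⟨by simp, by simpa using hρE⟩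
  -- distance estimate
  have h1 : d ≤ dist z (ρ : ℂ) := by
    calc d ≤ Metric.infDist z R := hz₀min hz
      _ ≤ dist z (ρ : ℂ) := Metric.infDist_le_dist_of_mem hρR
  have habs : ‖(θ : ℂ) * I‖ = |θ| := by simp
  have h2 : dist z (ρ : ℂ) ≤ ρ * (2 * |θ|) := by
    rw [Complex.dist_eq, hzρ]
    have : (ρ : ℂ) * Complex.exp ((θ : ℂ) * I) - (ρ : ℂ)
        = (ρ : ℂ) * (Complex.exp ((θ : ℂ) * I) - 1) := by ring
    rw [this, norm_mul]
    simp only [Complex.norm_real, Real.norm_eq_abs, abs_of_pos hρpos]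
    apply mul_le_mul_of_nonneg_left _ hρpos.le
    have := Complex.norm_exp_sub_one_le (x := (θ : ℂ) * I)
      (by rw [habs]; exact le_trans hθle (min_le_left _ _))
    rwa [habs] at this
  have hρM : ρ ≤ M' := by
    have : ‖z‖ = ρ := by
      rw [hzρ, norm_mul, Complex.norm_exp]
      simp [abs_of_pos hρpos]
    calc ρ = ‖z‖ := this.symm
      _ ≤ M := hM z hz
      _ ≤ M' := le_max_left _ _
  have h3 : ρ * (2 * |θ|) ≤ M' * (2 * (d / (4 * M'))) := by
    apply mul_le_mul hρM _ (by positivity) hM'pos.le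
    have : |θ| ≤ d / (4 * M') := le_trans hθle (min_le_right _ _)
    linarith
  have h4 : M' * (2 * (d / (4 * M'))) = d / 2 := by field_simp; ring
  linarith [h1, h2, h3]

theorem stmt_1 (β e₀' : ℝ) (hβ : 0 < β) (K : Set ℂ) (hK : IsCompact K)
    (hKD : K ⊆ {z : ℂ | ¬ (z.im = 0 ∧ Real.exp (β * e₀') ≤ z.re)}) :
    ∃ η > 0,
      (∀ z ∈ K, ∀ ξ : ℂ, e₀' ≤ ξ.re → |ξ.im| ≤ η / β →
        ¬ ((1 - z * Complex.exp (-(β : ℂ) * ξ)).im = 0 ∧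
           (1 - z * Complex.exp (-(β : ℂ) * ξ)).re ≤ 0)) ∧
      AnalyticOn ℂ
        (fun p : ℂ × ℂ => Complex.log (1 - p.1 * Complex.exp (-(β : ℂ) * p.2)))
        (K ×ˢ {ξ : ℂ | e₀' < ξ.re ∧ |ξ.im| < η / β}) := by
  rcases K.eq_empty_or_nonempty with hKe | hKne
  · refine ⟨1, one_pos, ?_, ?_⟩
    · intro z hz; rw [hKe] at hz; exact absurd hz (notMem_empty z)
    · intro p hp; rw [hKe, Set.empty_prod] at hp; exact absurd hp (notMem_empty p)
  obtain ⟨η, hηpos, hmain⟩ := stmt_1_aux β e₀' hβ K hK hKD hKne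
  refine ⟨η, hηpos, hmain, ?_⟩
  apply AnalyticOnNhd.analyticOn
  intro p hp
  have hp1 : p.1 ∈ K := hp.1
  have hp2 : e₀' < p.2.re ∧ |p.2.im| < η / β := hp.2
  have hslit : 1 - p.1 * Complex.exp (-(β : ℂ) * p.2) ∈ slitPlane := by
    have h := hmain p.1 hp1 p.2 hp2.1.le hp2.2.le
    by_contra hc
    simp only [slitPlane, mem_setOf_eq, not_or, not_lt, not_ne_iff] at hc
    exact h ⟨hc.2, hc.1⟩
  have hg : AnalyticAt ℂ (fun p : ℂ × ℂ => 1 - p.1 * Complex.exp (-(β : ℂ) * p.2)) p := by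
    apply analyticAt_const.sub
    exact analyticAt_fst.mul
      (analyticAt_cexp.comp ((analyticAt_const.mul analyticAt_snd)))
  exact hg.clog hslit
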